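/- arXiv:2304.00849 — 4 statements merged into one kernel-verified Lean document; each statement's English description precedes it below -/
import Mathlib

section
/- If G is a connected graph with maximum degree Δ, then every k-antiresolving set of G satisfies k ≤ Δ; in particular, G is κ-metric antidimensional for some κ ≤ Δ. -/
open SimpleGraph

/-- Two vertices have the same distances to every vertex of `S`. -/
def sameDists {V : Type*} (G : SimpleGraph V) (S : Set V) (x y : V) : Prop :=
  ∀ z ∈ S, G.dist x z = G.dist y z

/-- The equivalence class (outside `S`) of `x` under the equal-distance relation `R_S`. -/
def cls {V : Type*} (G : SimpleGraph V) (S : Set V) (x : V) : Set V :=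
  {y | y ∉ S ∧ sameDists G S x y}

/-- `S` is a `k`-antiresolving set: `S` is nonempty, does not cover `V`, and the minimum
size of an equivalence class of `R_S` on `V ∖ S` equals `k`. -/
def IsKARS {V : Type*} (G : SimpleGraph V) (k : ℕ) (S : Set V) : Prop :=
  S.Nonempty ∧ Sᶜ.Nonempty ∧
    (∀ x ∉ S, k ≤ (cls G S x).ncard) ∧ ∃ x ∉ S, (cls G S x).ncard = k

/-- The `k`-metric antidimension: the smallest cardinality of a `k`-antiresolving set,
`⊤` (i.e. `+∞`) if none exists. -/
noncomputable def adim {V : Type*} (G : SimpleGraph V) (k : ℕ) : ℕ∞ :=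
  sInf ((fun S => (S.ncard : ℕ∞)) '' {S : Set V | IsKARS G k S})

/-- If `G` is a connected graph with maximum degree `Δ`, every `k`-antiresolving set
satisfies `k ≤ Δ`; in particular `G` is `κ`-metric antidimensional for some `κ ≤ Δ`. -/
theorem stmt0 {V : Type*} [Fintype V] [Nontrivial V] (G : SimpleGraph V)
    [DecidableRel G.Adj] (hG : G.Connected) :
    (∀ (k : ℕ) (S : Set V), IsKARS G k S → k ≤ G.maxDegree) ∧
    ∃ κ ≤ G.maxDegree, (∃ S : Set V, IsKARS G κ S) ∧
      ∀ k, κ < k → ¬∃ S : Set V, IsKARS G k S := by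

  classical
  have keyA : ∀ (k : ℕ) (S : Set V), IsKARS G k S → k ≤ G.maxDegree := by
    rintro k S ⟨⟨b, hb⟩, ⟨a, ha⟩, hmin, -⟩
    obtain ⟨p⟩ := hG.preconnected a b
    obtain ⟨d, -, hfst, hsnd⟩ := p.exists_boundary_dart Sᶜ ha (by simpa using hb)
    have hx : d.fst ∉ S := hfst
    have hs : d.snd ∈ S := by simpa using hsnd
    have hsub : cls G S d.fst ⊆ G.neighborSet d.snd := by
      rintro y ⟨hyS, hy⟩
      have h1 : G.dist d.fst d.snd = 1 := dist_eq_one_iff_adj.2 d.adj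
      have h2 : G.dist y d.snd = 1 := by rw [← hy d.snd hs, h1]
      exact (dist_eq_one_iff_adj.1 h2).symm
    calc k ≤ (cls G S d.fst).ncard := hmin d.fst hx
      _ ≤ (G.neighborSet d.snd).ncard := Set.ncard_le_ncard hsub (Set.toFinite _)
      _ = G.degree d.snd := by
          rw [SimpleGraph.degree, SimpleGraph.neighborFinset,
            Set.ncard_eq_toFinset_card']
      _ ≤ G.maxDegree := G.degree_le_maxDegree d.snd
  refine ⟨keyA, ?_⟩
  -- existence of some k-ARS
  obtain ⟨v, w, hvw⟩ := exists_pair_ne V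
  have hexists : ∃ k, ∃ S : Set V, IsKARS G k S := by
    set S : Set V := {v} with hSdef
    have hw : w ∉ S := by simp [hSdef, hvw.symm]
    set K : Set ℕ := (fun x => (cls G S x).ncard) '' Sᶜ with hK
    have hKne : K.Nonempty := ⟨_, ⟨w, hw, rfl⟩⟩
    refine ⟨sInf K, S, ⟨⟨v, rfl⟩, ⟨w, hw⟩, ?_, ?_⟩⟩
    · intro x hx
      exact Nat.sInf_le ⟨x, hx, rfl⟩
    · obtain ⟨x, hx, hxeq⟩ := Nat.sInf_mem hKne
      exact ⟨x, hx, hxeq⟩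
  set T : Set ℕ := {k | ∃ S : Set V, IsKARS G k S} with hT
  have hTne : T.Nonempty := hexists
  have hbdd : BddAbove T := ⟨G.maxDegree, fun k ⟨S, hS⟩ => keyA k S hS⟩
  have hmem : sSup T ∈ T := Nat.sSup_mem hTne hbdd
  obtain ⟨S, hS⟩ := hmem
  refine ⟨sSup T, keyA _ S hS, ⟨S, hS⟩, ?_⟩
  intro k hk ⟨S', hS'⟩
  exact absurd (le_csSup hbdd ⟨S', hS'⟩) (not_le.2 hk)
end

section
/- For r,s ≥ 3 both odd, any single vertex of the torus C_r □ C_s forms a 4-antiresolving set, and hence adim_4(C_r □ C_s) = 1. -/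
open SimpleGraph

open Fin.CommRing Fin.NatCast

lemma val_sub' {n : ℕ} (a b : Fin n) :
    (a - b).val = if b.val ≤ a.val then a.val - b.val else n - b.val + a.val := by
  have hb := b.isLt; have ha := a.isLt
  rw [Fin.sub_def]
  split
  · have h : n - b.val + a.val = (a.val - b.val) + n := by omega
    simp only [Fin.val_mk, h, Nat.add_mod_right, Nat.mod_eq_of_lt (by omega : a.val - b.val < n)]
  · simp only [Fin.val_mk, Nat.mod_eq_of_lt (by omega : n - b.val + a.val < n)]

lemma val_neg' {n : ℕ} (a : Fin n) :
    (-a).val = if a.val = 0 then 0 else n - a.val := by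
  have ha := a.isLt
  rw [Fin.neg_def]
  split
  · simp only [Fin.val_mk]
    have h : n - a.val = n := by omega
    rw [h, Nat.mod_self]
  · simp only [Fin.val_mk, Nat.mod_eq_of_lt (by omega : n - a.val < n)]

lemma val_add' {n : ℕ} (a b : Fin n) :
    (a + b).val = if a.val + b.val < n then a.val + b.val else a.val + b.val - n := by
  have hb := b.isLt; have ha := a.isLt
  rw [Fin.add_def]
  show (a.val + b.val) % n = _
  split
  · exact Nat.mod_eq_of_lt (by omega)
  · have h : a.val + b.val = (a.val + b.val - n) + n := by omega
    conv_lhs => rw [h]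
    rw [Nat.add_mod_right]
    exact Nat.mod_eq_of_lt (show a.val + b.val - n < n by omega)

lemma val_one3 (m : ℕ) : (1 : Fin (m+3)).val = 1 := rfl

lemma cyc_connected (m : ℕ) : (cycleGraph (m+3)).Connected := cycleGraph_connected

lemma cyc_dist_le (m : ℕ) : ∀ (k : ℕ) (u v : Fin (m+3)), (v - u).val = k →
    (cycleGraph (m+3)).dist u v ≤ k := by
  intro k
  induction k with
  | zero =>
    intro u v h
    have : v - u = 0 := Fin.ext (by simpa using h)
    have : v = u := by linear_combination this
    subst this
    simp [SimpleGraph.dist_self]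
  | succ k ih =>
    intro u v h
    have hadj : (cycleGraph (m+3)).Adj u (u+1) := by
      rw [cycleGraph_adj']
      right
      have : u + 1 - u = 1 := by ring
      rw [this, val_one3]
    have h2 : (v - (u+1)).val = k := by
      have e : v - (u + 1) = (v - u) - 1 := by ring
      rw [e, val_sub', val_one3]
      have := (v - u).isLt
      split <;> omega
    calc (cycleGraph (m+3)).dist u v
        ≤ (cycleGraph (m+3)).dist u (u+1) + (cycleGraph (m+3)).dist (u+1) v :=
          (cyc_connected m).dist_triangle
      _ ≤ 1 + k := by
          gcongr
          · simpa using SimpleGraph.dist_le hadj.toWalk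
          · exact ih _ _ h2
      _ = k + 1 := by omega
lemma cyc_walk_le (m : ℕ) : ∀ {u v : Fin (m+3)} (w : (cycleGraph (m+3)).Walk u v),
    min (v - u).val (m + 3 - (v - u).val) ≤ w.length := by
  intro u v w
  induction w with
  | nil => simp
  | @cons u z v h p ih =>
    rw [cycleGraph_adj'] at h
    rw [Walk.length_cons]
    have hd := (v - u).isLt
    have he := (v - z).isLt
    rcases h with h1 | h1
    · -- (u - z).val = 1, so z = u - 1, v - u = (v - z) - 1
      have hz : u - z = 1 := Fin.ext (by rw [h1, val_one3])
      have e : v - u = (v - z) - 1 := by linear_combination -hz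
      rw [e, val_sub', val_one3]
      split <;> omega
    · have hz : z - u = 1 := Fin.ext (by rw [h1, val_one3])
      have e : v - u = (v - z) + 1 := by linear_combination hz
      rw [e, val_add', val_one3]
      split <;> omega

lemma cyc_dist_eq (m : ℕ) (u v : Fin (m+3)) :
    (cycleGraph (m+3)).dist u v = min (v - u).val (m + 3 - (v - u).val) := by
  apply le_antisymm
  · apply le_min
    · exact cyc_dist_le m _ u v rfl
    · rcases eq_or_ne v u with rfl | hne
      · simp [SimpleGraph.dist_self]
      · have h0 : (v - u).val ≠ 0 := by
          intro h
          exact hne (by linear_combination (Fin.ext h : v - u = 0))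
        have : (u - v).val = m + 3 - (v - u).val := by
          have e : u - v = -(v - u) := by ring
          rw [e, val_neg', if_neg h0]
        rw [SimpleGraph.dist_comm, ← this]
        exact cyc_dist_le m _ v u rfl
  · obtain ⟨w, hw⟩ := (cyc_connected m).exists_walk_length_eq_dist u v
    rw [← hw]
    exact cyc_walk_le m w
lemma boxProd_walk_le {α β : Type*} {G : SimpleGraph α} {H : SimpleGraph β}
    (hG : G.Connected) (hH : H.Connected) :
    ∀ {x y : α × β} (w : (G □ H).Walk x y),
      G.dist x.1 y.1 + H.dist x.2 y.2 ≤ w.length := by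
  intro x y w
  induction w with
  | nil => simp
  | @cons x z y h p ih =>
    rw [Walk.length_cons]
    rcases (boxProd_adj).mp h with ⟨ha, he⟩ | ⟨ha, he⟩
    · have h1 : G.dist x.1 y.1 ≤ 1 + G.dist z.1 y.1 := by
        refine le_trans (hG.dist_triangle (v := z.1)) ?_
        have : G.dist x.1 z.1 ≤ 1 := by simpa using SimpleGraph.dist_le ha.toWalk
        omega
      have h2 : H.dist x.2 y.2 = H.dist z.2 y.2 := by rw [he]
      omega
    · have h1 : H.dist x.2 y.2 ≤ 1 + H.dist z.2 y.2 := by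
        refine le_trans (hH.dist_triangle (v := z.2)) ?_
        have : H.dist x.2 z.2 ≤ 1 := by simpa using SimpleGraph.dist_le ha.toWalk
        omega
      have h2 : G.dist x.1 y.1 = G.dist z.1 y.1 := by rw [he]
      omega

lemma boxProd_dist {α β : Type*} {G : SimpleGraph α} {H : SimpleGraph β}
    (hG : G.Connected) (hH : H.Connected) (x y : α × β) :
    (G □ H).dist x y = G.dist x.1 y.1 + H.dist x.2 y.2 := by
  apply le_antisymm
  · obtain ⟨w1, hw1⟩ := hG.exists_walk_length_eq_dist x.1 y.1
    obtain ⟨w2, hw2⟩ := hH.exists_walk_length_eq_dist x.2 y.2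
    have := SimpleGraph.dist_le ((w1.boxProdLeft H x.2).append (w2.boxProdRight G y.1))
    have hl : ((w1.boxProdLeft H x.2).append (w2.boxProdRight G y.1)).length
        = w1.length + w2.length := by
      rw [Walk.length_append]
      exact congrArg₂ (· + ·) (Walk.length_map _ _) (Walk.length_map _ _)
    rw [hl, hw1, hw2] at this
    exact this
  · obtain ⟨w, hw⟩ := ((hG.boxProd hH).exists_walk_length_eq_dist x y)
    rw [← hw]
    exact boxProd_walk_le hG hH w
def F (n : ℕ) (w : Fin n) : ℕ := min w.val (n - w.val)

/-- distance-to-a-point function on the cycle -/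
lemma F_neg {n : ℕ} (w : Fin n) : F n (-w) = F n w := by
  have := w.isLt
  rw [F, F, val_neg']
  split <;> omega

lemma F_le (c : ℕ) (w : Fin (2*c+3)) : F (2*c+3) w ≤ c + 1 := by
  have := w.isLt; rw [F]; omega

lemma F_eq_zero_iff (c : ℕ) (w : Fin (2*c+3)) : F (2*c+3) w = 0 ↔ w = 0 := by
  have := w.isLt
  rw [F]
  constructor
  · intro h
    exact Fin.ext (by rw [Fin.val_zero]; omega)
  · rintro rfl
    rw [Fin.val_zero]
    omega

lemma F_cast (c i : ℕ) (hi : i ≤ c + 1) : F (2*c+3) (i : Fin (2*c+3)) = i := by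
  rw [F, Fin.val_cast_of_lt (by omega : i < 2*c+3)]
  omega

lemma val_cast' (c i : ℕ) (hi : i ≤ c + 1) : ((i : Fin (2*c+3))).val = i :=
  Fin.val_cast_of_lt (by omega)

lemma val_neg_cast (c i : ℕ) (hi : i ≤ c + 1) :
    ((-(i : Fin (2*c+3)))).val = if i = 0 then 0 else 2*c+3 - i := by
  rw [val_neg', val_cast' c i hi]

lemma torus_dist (a b : ℕ) (u v : Fin (2*a+3) × Fin (2*b+3)) :
    ((cycleGraph (2*a+3)).boxProd (cycleGraph (2*b+3))).dist u v
      = F (2*a+3) (v.1 - u.1) + F (2*b+3) (v.2 - u.2) := by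
  rw [boxProd_dist (cyc_connected (2*a)) (cyc_connected (2*b)),
    cyc_dist_eq (2*a), cyc_dist_eq (2*b)]
  rfl

lemma mem_cls {V : Type*} (G : SimpleGraph V) (x y z : V) :
    z ∈ cls G {x} y ↔ z ≠ x ∧ G.dist y x = G.dist z x := by
  simp [cls, sameDists]

lemma cls_lower (a b : ℕ) (x y : Fin (2*a+3) × Fin (2*b+3)) (hxy : y ≠ x) :
    4 ≤ (cls ((cycleGraph (2*a+3)).boxProd (cycleGraph (2*b+3))) {x} y).ncard := by
  set G := (cycleGraph (2*a+3)).boxProd (cycleGraph (2*b+3)) with hGdef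
  have hGc : G.Connected := Connected.boxProd (cyc_connected (2*a)) (cyc_connected (2*b))
  obtain ⟨t, htdef⟩ : ∃ t, G.dist y x = t := ⟨_, rfl⟩
  have ht1 : 1 ≤ t := htdef ▸ hGc.pos_dist_of_ne hxy
  have ht2 : t ≤ (a+1) + (b+1) := by
    rw [← htdef, hGdef, torus_dist]
    have := F_le a (x.1 - y.1); have := F_le b (x.2 - y.2)
    omega
  obtain ⟨A, B, A', B', hAf, hBf⟩ :
      ∃ A B A' B' : ℕ, (1 ≤ A ∧ A ≤ a+1 ∧ B ≤ b+1 ∧ A + B = t) ∧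
        (1 ≤ B' ∧ B' ≤ b+1 ∧ A' ≤ a+1 ∧ A' + B' = t) :=
    ⟨min t (a+1), t - min t (a+1), t - min t (b+1), min t (b+1), by omega, by omega⟩
  obtain ⟨cA, hvA⟩ : ∃ w : Fin (2*a+3), w.val = A := ⟨(A : Fin _), val_cast' a A (by omega)⟩
  obtain ⟨cB, hvB⟩ : ∃ w : Fin (2*b+3), w.val = B := ⟨(B : Fin _), val_cast' b B (by omega)⟩
  obtain ⟨cA', hvA'⟩ : ∃ w : Fin (2*a+3), w.val = A' := ⟨(A' : Fin _), val_cast' a A' (by omega)⟩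
  obtain ⟨cB', hvB'⟩ : ∃ w : Fin (2*b+3), w.val = B' := ⟨(B' : Fin _), val_cast' b B' (by omega)⟩
  have hvnA : (-cA).val = 2*a+3 - A := by rw [val_neg', hvA, if_neg (by omega)]
  have hvnB' : (-cB').val = 2*b+3 - B' := by rw [val_neg', hvB', if_neg (by omega)]
  have hvnB : ((-cB).val = 0 ∧ B = 0) ∨ ((-cB).val = 2*b+3 - B ∧ 1 ≤ B) := by
    rw [val_neg', hvB]
    split
    · exact Or.inl ⟨rfl, by omega⟩
    · exact Or.inr ⟨rfl, by omega⟩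
  have hvnA' : ((-cA').val = 0 ∧ A' = 0) ∨ ((-cA').val = 2*a+3 - A' ∧ 1 ≤ A') := by
    rw [val_neg', hvA']
    split
    · exact Or.inl ⟨rfl, by omega⟩
    · exact Or.inr ⟨rfl, by omega⟩
  have hFA : F (2*a+3) cA = A := by rw [F, hvA]; omega
  have hFB : F (2*b+3) cB = B := by rw [F, hvB]; omega
  have hFA' : F (2*a+3) cA' = A' := by rw [F, hvA']; omega
  have hFB' : F (2*b+3) cB' = B' := by rw [F, hvB']; omega
  have hdistpt : ∀ (p : Fin (2*a+3)) (q : Fin (2*b+3)),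
      G.dist (x.1 + p, x.2 + q) x = F (2*a+3) p + F (2*b+3) q := by
    intro p q
    rw [hGdef, torus_dist]
    have e1 : x.1 - (x.1 + p) = -p := by ring
    have e2 : x.2 - (x.2 + q) = -q := by ring
    show F (2*a+3) (x.1 - (x.1 + p)) + F (2*b+3) (x.2 - (x.2 + q)) = _
    rw [e1, e2, F_neg, F_neg]
  have hmem : ∀ z : Fin (2*a+3) × Fin (2*b+3), G.dist z x = t → z ∈ cls G {x} y := by
    intro z hz
    rw [mem_cls]
    constructor
    · rintro rfl
      rw [SimpleGraph.dist_self] at hz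
      omega
    · rw [hz, htdef]
  have mem1 := hmem (x.1 + cA, x.2 + cB) (by rw [hdistpt, hFA, hFB]; omega)
  have mem2 := hmem (x.1 + -cA, x.2 + -cB) (by rw [hdistpt, F_neg, F_neg, hFA, hFB]; omega)
  have mem3 := hmem (x.1 + cA', x.2 + -cB') (by rw [hdistpt, F_neg, hFA', hFB']; omega)
  have mem4 := hmem (x.1 + -cA', x.2 + cB') (by rw [hdistpt, F_neg, hFA', hFB']; omega)
  clear hmem hdistpt htdef hGc ht2 hFA hFB hFA' hFB'
  have hne : ∀ (p p' : Fin (2*a+3)) (q q' : Fin (2*b+3)), (p.val ≠ p'.val ∨ q.val ≠ q'.val) →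
      ((x.1+p, x.2+q) : Fin (2*a+3) × Fin (2*b+3)) ≠ (x.1+p', x.2+q') := by
    intro p p' q q' h heq
    rw [Prod.mk.injEq] at heq
    have h1 : p = p' := add_left_cancel heq.1
    have h2 : q = q' := add_left_cancel heq.2
    rcases h with h | h
    · exact h (by rw [h1])
    · exact h (by rw [h2])
  have h12 : (x.1 + cA, x.2 + cB) ≠ (x.1 + -cA, x.2 + -cB) :=
    hne cA (-cA) cB (-cB) (Or.inl (by omega))
  have h1Q1 : (x.1 + cA, x.2 + cB) ≠ (x.1 + cA', x.2 + -cB') :=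
    hne cA cA' cB (-cB') (Or.inr (by omega))
  have h1Q2 : (x.1 + cA, x.2 + cB) ≠ (x.1 + -cA', x.2 + cB') := by
    rcases eq_or_ne B B' with hBB | hBB
    · exact hne cA (-cA') cB cB' (Or.inl (by omega))
    · exact hne cA (-cA') cB cB' (Or.inr (by omega))
  have h2Q1 : (x.1 + -cA, x.2 + -cB) ≠ (x.1 + cA', x.2 + -cB') :=
    hne (-cA) cA' (-cB) (-cB') (Or.inl (by omega))
  have h2Q2 : (x.1 + -cA, x.2 + -cB) ≠ (x.1 + -cA', x.2 + cB') :=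
    hne (-cA) (-cA') (-cB) cB' (Or.inr (by omega))
  have hQ12 : (x.1 + cA', x.2 + -cB') ≠ (x.1 + -cA', x.2 + cB') :=
    hne cA' (-cA') (-cB') cB' (Or.inr (by omega))
  have hsub : ({(x.1 + cA, x.2 + cB), (x.1 + -cA, x.2 + -cB), (x.1 + cA', x.2 + -cB'),
      (x.1 + -cA', x.2 + cB')} : Set (Fin (2*a+3) × Fin (2*b+3))) ⊆ cls G {x} y := by
    intro z hz
    simp only [Set.mem_insert_iff, Set.mem_singleton_iff] at hz
    rcases hz with rfl | rfl | rfl | rfl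
    exacts [mem1, mem2, mem3, mem4]
  have hc : ({(x.1 + cA, x.2 + cB), (x.1 + -cA, x.2 + -cB), (x.1 + cA', x.2 + -cB'),
      (x.1 + -cA', x.2 + cB')} : Set (Fin (2*a+3) × Fin (2*b+3))).ncard = 4 := by
    rw [Set.ncard_insert_of_notMem (by simp [h12, h1Q1, h1Q2]),
        Set.ncard_insert_of_notMem (by simp [h2Q1, h2Q2]),
        Set.ncard_insert_of_notMem (by simp [hQ12]), Set.ncard_singleton]
  calc (4:ℕ) = _ := hc.symm
    _ ≤ _ := Set.ncard_le_ncard hsub (Set.toFinite _)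
lemma val_one_odd (c : ℕ) : (1 : Fin (2*c+3)).val = 1 := val_one3 (2*c)

lemma val_negone_odd (c : ℕ) : (-1 : Fin (2*c+3)).val = 2*c+2 := by
  rw [val_neg', val_one_odd]
  simp

lemma F_one (c : ℕ) : F (2*c+3) 1 = 1 := by
  rw [F, val_one_odd]; omega

lemma F_zero (c : ℕ) : F (2*c+3) 0 = 0 := by
  rw [F, Fin.val_zero]; omega

lemma F_eq_one (c : ℕ) (w : Fin (2*c+3)) (h : F (2*c+3) w = 1) : w = 1 ∨ w = -1 := by
  have hlt := w.isLt
  rw [F] at h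
  rcases (by omega : w.val = 1 ∨ w.val = 2*c+2) with h1 | h1
  · exact Or.inl (Fin.ext (by rw [h1, val_one_odd]))
  · exact Or.inr (Fin.ext (by rw [h1, val_negone_odd]))

lemma cls_exact (a b : ℕ) (x : Fin (2*a+3) × Fin (2*b+3)) :
    ((x.1 + 1, x.2) : Fin (2*a+3) × Fin (2*b+3)) ≠ x ∧
    (cls ((cycleGraph (2*a+3)).boxProd (cycleGraph (2*b+3))) {x} (x.1 + 1, x.2)).ncard = 4 := by
  set G := (cycleGraph (2*a+3)).boxProd (cycleGraph (2*b+3)) with hGdef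
  have key1 : ∀ (c : ℕ) (u : Fin (2*c+3)), u + 1 ≠ u := by
    intro c u h
    have h1 : (1 : Fin (2*c+3)) = 0 := by linear_combination h
    have := congrArg Fin.val h1
    rw [val_one_odd, Fin.val_zero] at this
    omega
  have key2 : ∀ (c : ℕ) (u : Fin (2*c+3)), u + -1 ≠ u := by
    intro c u h
    have h1 : (-1 : Fin (2*c+3)) = 0 := by linear_combination h
    have := congrArg Fin.val h1
    rw [val_negone_odd, Fin.val_zero] at this
    omega
  have key3 : ∀ (c : ℕ) (u : Fin (2*c+3)), u + 1 ≠ u + -1 := by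
    intro c u h
    have h1 : (1 : Fin (2*c+3)) = -1 := add_left_cancel h
    have := congrArg Fin.val h1
    rw [val_one_odd, val_negone_odd] at this
    omega
  have hyne : ((x.1 + 1, x.2) : Fin (2*a+3) × Fin (2*b+3)) ≠ x := by
    intro h
    exact key1 a x.1 (congrArg Prod.fst h)
  refine ⟨hyne, ?_⟩
  have hdistpt : ∀ (p : Fin (2*a+3)) (q : Fin (2*b+3)),
      G.dist (x.1 + p, x.2 + q) x = F (2*a+3) p + F (2*b+3) q := by
    intro p q
    rw [hGdef, torus_dist]
    have e1 : x.1 - (x.1 + p) = -p := by ring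
    have e2 : x.2 - (x.2 + q) = -q := by ring
    show F (2*a+3) (x.1 - (x.1 + p)) + F (2*b+3) (x.2 - (x.2 + q)) = _
    rw [e1, e2, F_neg, F_neg]
  have hdy : G.dist (x.1 + 1, x.2) x = 1 := by
    have e : (x.1 + 1, x.2) = ((x.1 + 1, x.2 + 0) : Fin (2*a+3) × Fin (2*b+3)) := by
      rw [add_zero]
    rw [e, hdistpt, F_one, F_zero]
  have hset : cls G {x} (x.1 + 1, x.2) =
      ({(x.1 + 1, x.2), (x.1 + -1, x.2), (x.1, x.2 + 1), (x.1, x.2 + -1)} :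
        Set (Fin (2*a+3) × Fin (2*b+3))) := by
    ext z
    rw [mem_cls, hdy]
    constructor
    · rintro ⟨hzx, hz⟩
      have hz1 : G.dist z x = 1 := hz.symm
      rw [hGdef, torus_dist] at hz1
      have hcase : (F (2*a+3) (x.1 - z.1) = 1 ∧ F (2*b+3) (x.2 - z.2) = 0) ∨
          (F (2*a+3) (x.1 - z.1) = 0 ∧ F (2*b+3) (x.2 - z.2) = 1) := by omega
      simp only [Set.mem_insert_iff, Set.mem_singleton_iff, Prod.ext_iff]
      rcases hcase with ⟨h1, h2⟩ | ⟨h1, h2⟩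
      · have hq : z.2 = x.2 := by
          have := (F_eq_zero_iff b _).mp h2
          have := sub_eq_zero.mp this
          exact this.symm
        rcases F_eq_one a _ h1 with hp | hp
        · right; left
          exact ⟨by linear_combination -hp, hq⟩
        · left
          exact ⟨by linear_combination -hp, hq⟩
      · have hq : z.1 = x.1 := by
          have := (F_eq_zero_iff a _).mp h1
          have := sub_eq_zero.mp this
          exact this.symm
        rcases F_eq_one b _ h2 with hp | hp
        · right; right; right
          exact ⟨hq, by linear_combination -hp⟩
        · right; right; left
          exact ⟨hq, by linear_combination -hp⟩
    · intro hz
      simp only [Set.mem_insert_iff, Set.mem_singleton_iff] at hz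
      have d2 : G.dist (x.1 + -1, x.2) x = 1 := by
        have e : ((x.1 + -1, x.2) : Fin (2*a+3) × Fin (2*b+3)) = (x.1 + -1, x.2 + 0) := by
          rw [add_zero]
        rw [e, hdistpt, F_neg, F_one, F_zero]
      have d3 : G.dist (x.1, x.2 + 1) x = 1 := by
        have e : ((x.1, x.2 + 1) : Fin (2*a+3) × Fin (2*b+3)) = (x.1 + 0, x.2 + 1) := by
          rw [add_zero]
        rw [e, hdistpt, F_one, F_zero]
      have d4 : G.dist (x.1, x.2 + -1) x = 1 := by
        have e : ((x.1, x.2 + -1) : Fin (2*a+3) × Fin (2*b+3)) = (x.1 + 0, x.2 + -1) := by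
          rw [add_zero]
        rw [e, hdistpt, F_neg, F_one, F_zero]
      rcases hz with rfl | rfl | rfl | rfl
      · exact ⟨hyne, hdy.symm ▸ rfl⟩
      · refine ⟨fun h => key2 a x.1 (congrArg Prod.fst h), by rw [d2]⟩
      · refine ⟨fun h => key1 b x.2 (congrArg Prod.snd h), by rw [d3]⟩
      · refine ⟨fun h => key2 b x.2 (congrArg Prod.snd h), by rw [d4]⟩
  rw [hset]
  have n1 : ((x.1 + 1, x.2) : Fin (2*a+3) × Fin (2*b+3)) ≠ (x.1 + -1, x.2) :=
    fun h => key3 a x.1 (congrArg Prod.fst h)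
  have n2 : ((x.1 + 1, x.2) : Fin (2*a+3) × Fin (2*b+3)) ≠ (x.1, x.2 + 1) :=
    fun h => key1 a x.1 (congrArg Prod.fst h)
  have n3 : ((x.1 + 1, x.2) : Fin (2*a+3) × Fin (2*b+3)) ≠ (x.1, x.2 + -1) :=
    fun h => key1 a x.1 (congrArg Prod.fst h)
  have n4 : ((x.1 + -1, x.2) : Fin (2*a+3) × Fin (2*b+3)) ≠ (x.1, x.2 + 1) :=
    fun h => key2 a x.1 (congrArg Prod.fst h)
  have n5 : ((x.1 + -1, x.2) : Fin (2*a+3) × Fin (2*b+3)) ≠ (x.1, x.2 + -1) :=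
    fun h => key2 a x.1 (congrArg Prod.fst h)
  have n6 : ((x.1, x.2 + 1) : Fin (2*a+3) × Fin (2*b+3)) ≠ (x.1, x.2 + -1) :=
    fun h => key3 b x.2 (congrArg Prod.snd h)
  rw [Set.ncard_insert_of_notMem (by simp [n1, n2, n3]),
      Set.ncard_insert_of_notMem (by simp [n4, n5]),
      Set.ncard_insert_of_notMem (by simp [n6]), Set.ncard_singleton]

/-- For odd `r, s ≥ 3`, any single vertex of the torus `C_r □ C_s` is a 4-ARS, and
`adim_4(C_r □ C_s) = 1`. -/
theorem stmt2 (r s : ℕ) (hr : 3 ≤ r) (hs : 3 ≤ s) (hro : Odd r) (hso : Odd s) :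
    (∀ x : Fin r × Fin s, IsKARS ((cycleGraph r).boxProd (cycleGraph s)) 4 {x}) ∧
    adim ((cycleGraph r).boxProd (cycleGraph s)) 4 = 1 := by
  obtain ⟨a, rfl⟩ : ∃ a, r = 2*a+3 := by
    obtain ⟨t, ht⟩ := hro
    exact ⟨t - 1, by omega⟩
  obtain ⟨b, rfl⟩ : ∃ b, s = 2*b+3 := by
    obtain ⟨t, ht⟩ := hso
    exact ⟨t - 1, by omega⟩
  have hK : ∀ x : Fin (2*a+3) × Fin (2*b+3),
      IsKARS ((cycleGraph (2*a+3)).boxProd (cycleGraph (2*b+3))) 4 {x} := by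
    intro x
    obtain ⟨hyne, hy4⟩ := cls_exact a b x
    refine ⟨Set.singleton_nonempty x, ⟨(x.1 + 1, x.2), by simpa using hyne⟩, ?_, ?_⟩
    · intro z hz
      exact cls_lower a b x z (by simpa using hz)
    · exact ⟨(x.1 + 1, x.2), by simpa using hyne, hy4⟩
  refine ⟨hK, ?_⟩
  apply le_antisymm
  · apply sInf_le
    exact ⟨{((0 : Fin (2*a+3)), (0 : Fin (2*b+3)))}, hK _, by simp⟩
  · apply le_sInf
    rintro e ⟨S, hS, rfl⟩
    have h1 : 1 ≤ S.ncard := (Set.ncard_pos (Set.toFinite S)).mpr hS.1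
    show (1:ℕ∞) ≤ (S.ncard : ℕ∞)
    exact_mod_cast h1
end

section
/- For r,s ≥ 3 of distinct parity, any single vertex of C_r □ C_s is a 2-antiresolving set, hence adim_2(C_r □ C_s) = 1 and C_r □ C_s is 2-metric antidimensional. -/
open SimpleGraph

namespace Tor

open scoped Fin.NatCast Fin.CommRing

def cd (n : ℕ) (a b : Fin n) : ℕ := min (a - b).val (b - a).val

variable {n : ℕ}

lemma sub_val (a b : Fin n) :
    ((a - b : Fin n) : ℕ) = if (b:ℕ) ≤ (a:ℕ) then (a:ℕ) - b else (a:ℕ) + n - b := by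
  rw [Fin.sub_def]
  have h1 : (a:ℕ) < n := a.isLt
  have h2 : (b:ℕ) < n := b.isLt
  split
  · next h =>
    simp only []
    rw [show n - (b:ℕ) + a = n + ((a:ℕ) - b) by omega, Nat.add_mod_left,
      Nat.mod_eq_of_lt (by omega)]
  · next h =>
    simp only []
    rw [Nat.mod_eq_of_lt (by omega)]
    omega
lemma add_val (a b : Fin n) :
    ((a + b : Fin n) : ℕ) = if (a:ℕ) + b < n then (a:ℕ) + b else (a:ℕ) + b - n := by
  rw [Fin.add_def]
  have h1 : (a:ℕ) < n := a.isLt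
  have h2 : (b:ℕ) < n := b.isLt
  split
  · next h => exact Nat.mod_eq_of_lt h
  · next h =>
    show ((a:ℕ) + b) % n = (a:ℕ) + b - n
    rw [show (a:ℕ) + b = n + ((a:ℕ) + b - n) by omega, Nat.add_mod_left,
      Nat.mod_eq_of_lt (by omega)]
    omega
lemma cd_eq (a b : Fin n) :
    cd n a b = if (b:ℕ) ≤ (a:ℕ) then min ((a:ℕ) - b) ((b:ℕ) + n - a)
      else min ((b:ℕ) - a) ((a:ℕ) + n - b) := by
  have h1 : (a:ℕ) < n := a.isLt
  have h2 : (b:ℕ) < n := b.isLt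
  rw [cd, sub_val, sub_val]
  split_ifs <;> omega
lemma cd_comm (a b : Fin n) : cd n a b = cd n b a := min_comm _ _
lemma cd_le_half (a b : Fin n) : cd n a b ≤ n / 2 := by
  have h1 : (a:ℕ) < n := a.isLt
  have h2 : (b:ℕ) < n := b.isLt
  rw [cd_eq]; split_ifs <;> omega
lemma cd_eq_zero (a b : Fin n) : cd n a b = 0 ↔ a = b := by
  have h1 : (a:ℕ) < n := a.isLt
  have h2 : (b:ℕ) < n := b.isLt
  rw [cd_eq, Fin.ext_iff]; split_ifs <;> omega
lemma cd_triangle (a b c : Fin n) : cd n a c ≤ cd n a b + cd n b c := by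
  have h1 : (a:ℕ) < n := a.isLt
  have h2 : (b:ℕ) < n := b.isLt
  have h3 : (c:ℕ) < n := c.isLt
  rw [cd_eq, cd_eq, cd_eq]; split_ifs <;> omega

-- new lemmas
lemma cd_shift [NeZero n] (a : Fin n) {k : ℕ} (hk : 2*k ≤ n) :
    cd n (a + (k : Fin n)) a = k := by
  have hn : 0 < n := Nat.pos_of_ne_zero (NeZero.ne n)
  have h1 : (a:ℕ) < n := a.isLt
  have hkv : (((k:ℕ) : Fin n) : ℕ) = k := Fin.val_cast_of_lt (by omega)
  rw [cd_eq, add_val, hkv]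
  split_ifs <;> omega

lemma cd_shift' [NeZero n] (a : Fin n) {k : ℕ} (hk : 2*k ≤ n) :
    cd n (a - (k : Fin n)) a = k := by
  have := cd_shift (a - (k:Fin n)) hk
  rwa [sub_add_cancel, cd_comm] at this

lemma cd_max_even [NeZero n] {m : ℕ} (hm : n = 2*m) (a b : Fin n) (h : cd n a b = m) :
    a = b + ((m:ℕ) : Fin n) := by
  have h1 : (a:ℕ) < n := a.isLt
  have h2 : (b:ℕ) < n := b.isLt
  have hkv : (((m:ℕ) : Fin n) : ℕ) = m := Fin.val_cast_of_lt (by omega)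
  rw [cd_eq] at h
  rw [Fin.ext_iff, add_val, hkv]
  split_ifs at h ⊢ <;> omega

lemma cd_max_odd [NeZero n] {q : ℕ} (hq : n = 2*q+1) (a b : Fin n) (h : cd n a b = q) :
    a = b + ((q:ℕ) : Fin n) ∨ a = b - ((q:ℕ) : Fin n) := by
  have h1 : (a:ℕ) < n := a.isLt
  have h2 : (b:ℕ) < n := b.isLt
  have hkv : (((q:ℕ) : Fin n) : ℕ) = q := Fin.val_cast_of_lt (by omega)
  rw [cd_eq] at h
  rw [Fin.ext_iff, Fin.ext_iff, add_val, sub_val, hkv]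
  split_ifs at h ⊢ <;> omega

lemma cd_eq_cd (a b c : Fin n) (h : cd n b a = cd n c a) :
    b = c ∨ b = a - (c - a) := by
  have h1 : (a:ℕ) < n := a.isLt
  have h2 : (b:ℕ) < n := b.isLt
  have h3 : (c:ℕ) < n := c.isLt
  rw [cd_eq, cd_eq] at h
  rw [Fin.ext_iff, Fin.ext_iff, sub_val a (c - a), sub_val c a]
  split_ifs at h ⊢ <;> omega


lemma cycle_adj_cd {a b : Fin n} (h : (cycleGraph n).Adj a b) : cd n a b ≤ 1 := by
  rw [cycleGraph_adj'] at h
  rcases h with h | h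
  · exact le_trans (min_le_left _ _) (le_of_eq h)
  · exact le_trans (min_le_right _ _) (le_of_eq h)

lemma exists_walk (hn : 3 ≤ n) (k : ℕ) : ∀ (a b : Fin n), ((a - b : Fin n) : ℕ) = k →
    ∃ w : (cycleGraph n).Walk a b, w.length = k := by
  haveI : NeZero n := ⟨by omega⟩
  induction k with
  | zero =>
    intro a b h
    have hab : a = b := by
      have : a - b = 0 := Fin.ext (by simpa using h)
      exact sub_eq_zero.mp this
    subst hab
    exact ⟨Walk.nil, rfl⟩
  | succ k ih =>
    intro a b h
    have hv1 : ((1 : Fin n) : ℕ) = 1 := by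
      rw [Fin.val_one']; exact Nat.mod_eq_of_lt (by omega)
    have hadj : (cycleGraph n).Adj a (a - 1) := by
      rw [cycleGraph_adj']
      left
      rw [sub_sub_cancel]
      exact hv1
    have hk : ((a - 1 - b : Fin n) : ℕ) = k := by
      have e : a - 1 - b = a - b - 1 := by ring
      rw [e, sub_val (a - b) 1, hv1]
      have hlt : ((a - b : Fin n) : ℕ) < n := (a - b).isLt
      split <;> omega
    obtain ⟨w, hw⟩ := ih (a - 1) b hk
    exact ⟨Walk.cons hadj w, by simp [hw]⟩

lemma walk_le (w : (cycleGraph n).Walk a b) : cd n a b ≤ w.length := by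
  induction w with
  | nil => exact Nat.le_zero.mpr ((cd_eq_zero _ _).mpr rfl)
  | @cons u x v h p ih =>
    calc cd n u v ≤ cd n u x + cd n x v := cd_triangle _ _ _
    _ ≤ 1 + p.length := by
        have := cycle_adj_cd h
        omega
    _ = (Walk.cons h p).length := by simp [Walk.length_cons]; omega

lemma cycle_reachable (hn : 3 ≤ n) (a b : Fin n) : (cycleGraph n).Reachable a b :=
  ⟨(exists_walk hn _ a b rfl).choose⟩

lemma cycle_connected (hn : 3 ≤ n) : (cycleGraph n).Connected := by
  haveI : Nonempty (Fin n) := ⟨⟨0, by omega⟩⟩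
  exact ⟨fun a b => cycle_reachable hn a b⟩

lemma cycle_dist (hn : 3 ≤ n) (a b : Fin n) : (cycleGraph n).dist a b = cd n a b := by
  apply le_antisymm
  · obtain ⟨w1, hw1⟩ := exists_walk hn _ a b rfl
    obtain ⟨w2, hw2⟩ := exists_walk hn _ b a rfl
    have d1 := SimpleGraph.dist_le w1
    have d2 := SimpleGraph.dist_le w2.reverse
    rw [Walk.length_reverse] at d2
    simp only [cd, le_min_iff]
    omega
  · obtain ⟨w, hw⟩ := (cycle_reachable hn a b).exists_walk_length_eq_dist
    rw [← hw]
    exact walk_le w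

lemma boxProd_walk_le {α β : Type*} {G : SimpleGraph α} {H : SimpleGraph β}
    (hG : G.Connected) (hH : H.Connected) {x y : α × β} (w : (G.boxProd H).Walk x y) :
    G.dist x.1 y.1 + H.dist x.2 y.2 ≤ w.length := by
  induction w with
  | nil => simp
  | @cons u z v h p ih =>
    rw [Walk.length_cons]
    rcases SimpleGraph.boxProd_adj.mp h with ⟨h1, h2⟩ | ⟨h1, h2⟩
    · have t := hG.dist_triangle (u := u.1) (v := z.1) (w := v.1)
      have e : G.dist u.1 z.1 ≤ 1 := SimpleGraph.dist_le (Walk.cons h1 Walk.nil)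
      have e2 : H.dist u.2 v.2 = H.dist z.2 v.2 := by rw [h2]
      omega
    · have t := hH.dist_triangle (u := u.2) (v := z.2) (w := v.2)
      have e : H.dist u.2 z.2 ≤ 1 := SimpleGraph.dist_le (Walk.cons h1 Walk.nil)
      have e2 : G.dist u.1 v.1 = G.dist z.1 v.1 := by rw [h2]
      omega

lemma boxProd_dist {α β : Type*} {G : SimpleGraph α} {H : SimpleGraph β}
    (hG : G.Connected) (hH : H.Connected) (x y : α × β) :
    (G.boxProd H).dist x y = G.dist x.1 y.1 + H.dist x.2 y.2 := by
  apply le_antisymm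
  · obtain ⟨w1, hw1⟩ := hG.exists_walk_length_eq_dist x.1 y.1
    obtain ⟨w2, hw2⟩ := hH.exists_walk_length_eq_dist x.2 y.2
    calc (G.boxProd H).dist x y
        ≤ (((w1.boxProdLeft H x.2).append (w2.boxProdRight G y.1)).copy
            (by simp) (by simp)).length := SimpleGraph.dist_le _
      _ = G.dist x.1 y.1 + H.dist x.2 y.2 := by
          simp [Walk.length_copy, Walk.length_append, Walk.boxProdLeft, Walk.boxProdRight,
            Walk.length_map, hw1, hw2]
          exact (Walk.length_append _ _).trans ((congrArg₂ (· + ·) (Walk.length_map _ _) (Walk.length_map _ _)).trans (by rw [hw1, hw2]))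
  · obtain ⟨w, hw⟩ := ((hG.boxProd hH).exists_walk_length_eq_dist x y)
    rw [← hw]
    exact boxProd_walk_le hG hH w

def pd (r s : ℕ) (x y : Fin r × Fin s) : ℕ := cd r x.1 y.1 + cd s x.2 y.2

variable {r s : ℕ}

lemma pd_swap (x y : Fin r × Fin s) : pd s r x.swap y.swap = pd r s x y := by
  simp only [pd, Prod.swap, Prod.fst, Prod.snd]
  exact add_comm _ _

lemma pd_self (x : Fin r × Fin s) : pd r s x x = 0 := by
  simp [pd, (cd_eq_zero _ _).mpr rfl]

lemma pd_eq_zero {x y : Fin r × Fin s} (h : pd r s x y = 0) : x = y := by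
  simp only [pd] at h
  have h1 : cd r x.1 y.1 = 0 := by omega
  have h2 : cd s x.2 y.2 = 0 := by omega
  exact Prod.ext ((cd_eq_zero _ _).mp h1) ((cd_eq_zero _ _).mp h2)

/-- L1: in `C_r □ C_s` with `s` odd, each distance value from `x` attained by some `y ≠ x`
is attained by at least two distinct vertices `≠ x`. -/
lemma level_two (hr : 3 ≤ r) {q : ℕ} (hsq : s = 2*q+1) (hq : 1 ≤ q)
    (x y : Fin r × Fin s) (hxy : y ≠ x) :
    ∃ u v : Fin r × Fin s, u ≠ v ∧ u ≠ x ∧ v ≠ x ∧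
      pd r s u x = pd r s y x ∧ pd r s v x = pd r s y x := by
  haveI : NeZero r := ⟨by omega⟩
  haveI : NeZero s := ⟨by omega⟩
  set N := pd r s y x with hN
  have hN1 : 1 ≤ N := by
    rcases Nat.eq_zero_or_pos N with h0 | h
    · exact absurd (pd_eq_zero h0) hxy
    · exact h
  have hs2 : s / 2 = q := by omega
  have hNle : N ≤ r/2 + q := by
    have t1 := cd_le_half y.1 x.1
    have t2 := cd_le_half y.2 x.2
    simp only [hN, pd]
    omega
  set j := min N q with hj
  set i := N - j with hi
  have hj1 : 1 ≤ j := by omega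
  have hjq : j ≤ q := min_le_right _ _
  have hir : 2*i ≤ r := by
    have : i ≤ r/2 := by omega
    omega
  have hjs : 2*j ≤ s := by omega
  have du : pd r s (x.1 + (i:Fin r), x.2 + (j:Fin s)) x = N := by
    show cd r (x.1 + (i:Fin r)) x.1 + cd s (x.2 + (j:Fin s)) x.2 = N
    rw [cd_shift _ hir, cd_shift _ hjs]
    omega
  have dv : pd r s (x.1 + (i:Fin r), x.2 - (j:Fin s)) x = N := by
    show cd r (x.1 + (i:Fin r)) x.1 + cd s (x.2 - (j:Fin s)) x.2 = N
    rw [cd_shift _ hir, cd_shift' _ hjs]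
    omega
  refine ⟨_, _, ?_, ?_, ?_, du, dv⟩
  · intro h
    have h2 : x.2 + (j:Fin s) = x.2 - (j:Fin s) := congrArg Prod.snd h
    have hv := congrArg Fin.val h2
    have hx2 : (x.2 : ℕ) < s := x.2.isLt
    have hjv : (((j:ℕ) : Fin s) : ℕ) = j := Fin.val_cast_of_lt (by omega)
    rw [add_val, sub_val, hjv] at hv
    split_ifs at hv <;> omega
  · intro h
    rw [h, pd_self] at du
    omega
  · intro h
    rw [h, pd_self] at dv
    omega

/-- L2 core: level set at maximum distance is the explicit pair. -/
lemma ecc_level [NeZero r] [NeZero s] {m q : ℕ}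
    (hre : r = 2*m) (hm : 2 ≤ m) (hsq : s = 2*q+1) (hq : 1 ≤ q)
    (u : Fin r × Fin s) :
    {w | pd r s w u = m + q} =
      {(u.1 + ((m:ℕ) : Fin r), u.2 + ((q:ℕ) : Fin s)),
       (u.1 + ((m:ℕ) : Fin r), u.2 - ((q:ℕ) : Fin s))} := by
  ext w
  simp only [Set.mem_setOf_eq, Set.mem_insert_iff, Set.mem_singleton_iff]
  constructor
  · intro h
    have t1 := cd_le_half w.1 u.1
    have t2 := cd_le_half w.2 u.2
    have hr2 : r / 2 = m := by omega
    have hs2 : s / 2 = q := by omega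
    simp only [pd] at h
    have hc1 : cd r w.1 u.1 = m := by omega
    have hc2 : cd s w.2 u.2 = q := by omega
    have e1 := cd_max_even hre w.1 u.1 hc1
    rcases cd_max_odd hsq w.2 u.2 hc2 with e2 | e2
    · exact Or.inl (Prod.ext e1 e2)
    · exact Or.inr (Prod.ext e1 e2)
  · intro h
    have hmr : 2*m ≤ r := by omega
    have hqs : 2*q ≤ s := by omega
    rcases h with h | h <;> subst h <;> simp only [pd]
    · rw [cd_shift _ hmr, cd_shift _ hqs]
    · rw [cd_shift _ hmr, cd_shift' _ hqs]

/-- L2: the pair of eccentric vertices. -/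
lemma ecc_pair [NeZero r] [NeZero s] {m q : ℕ}
    (hre : r = 2*m) (hm : 2 ≤ m) (hsq : s = 2*q+1) (hq : 1 ≤ q)
    (x : Fin r × Fin s) :
    ∃ p p' : Fin r × Fin s, p ≠ p' ∧ p ≠ x ∧ p' ≠ x ∧
      {w | w ≠ x ∧ pd r s p x = pd r s w x} = {p, p'} := by
  set p : Fin r × Fin s := (x.1 + ((m:ℕ) : Fin r), x.2 + ((q:ℕ) : Fin s)) with hp
  set p' : Fin r × Fin s := (x.1 + ((m:ℕ) : Fin r), x.2 - ((q:ℕ) : Fin s)) with hp'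
  have hlev := ecc_level hre hm hsq hq x
  have hdp : pd r s p x = m + q := by
    show cd r (x.1 + ((m:ℕ):Fin r)) x.1 + cd s (x.2 + ((q:ℕ):Fin s)) x.2 = m + q
    rw [cd_shift _ (by omega), cd_shift _ (by omega)]
  have hdp' : pd r s p' x = m + q := by
    show cd r (x.1 + ((m:ℕ):Fin r)) x.1 + cd s (x.2 - ((q:ℕ):Fin s)) x.2 = m + q
    rw [cd_shift _ (by omega), cd_shift' _ (by omega)]
  have hpne : p ≠ p' := by
    intro h
    have h2 : x.2 + ((q:ℕ):Fin s) = x.2 - ((q:ℕ):Fin s) := congrArg Prod.snd h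
    have hv := congrArg Fin.val h2
    have hx2 : (x.2 : ℕ) < s := x.2.isLt
    have hjv : (((q:ℕ) : Fin s) : ℕ) = q := Fin.val_cast_of_lt (by omega)
    rw [add_val, sub_val, hjv] at hv
    split_ifs at hv <;> omega
  have hpx : p ≠ x := by
    intro h
    rw [h, pd_self] at hdp
    omega
  have hp'x : p' ≠ x := by
    intro h
    rw [h, pd_self] at hdp'
    omega
  refine ⟨p, p', hpne, hpx, hp'x, ?_⟩
  ext w
  simp only [Set.mem_setOf_eq, Set.mem_insert_iff, Set.mem_singleton_iff]
  constructor
  · intro ⟨hwx, hwd⟩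
    have : w ∈ {w | pd r s w x = m + q} := by
      simp only [Set.mem_setOf_eq]
      omega
    rw [hlev] at this
    exact this
  · intro h
    rcases h with h | h <;> subst h
    · exact ⟨hpx, rfl⟩
    · exact ⟨hp'x, by omega⟩

/-- L3: for any nonempty proper `S`, some class has at most two elements. -/
lemma class_le_two {m q : ℕ} (hre : r = 2*m) (hm : 2 ≤ m) (hsq : s = 2*q+1) (hq : 1 ≤ q)
    (S : Set (Fin r × Fin s)) (hSne : S.Nonempty) (hSc : Sᶜ.Nonempty) :
    ∃ y ∉ S, {w | w ∉ S ∧ ∀ z ∈ S, pd r s y z = pd r s w z}.ncard ≤ 2 := by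
  haveI : NeZero r := ⟨by omega⟩
  haveI : NeZero s := ⟨by omega⟩
  have pair_le : ∀ (a b : Fin r × Fin s), ({a, b} : Set (Fin r × Fin s)).ncard ≤ 2 := by
    intro a b
    exact (Set.ncard_insert_le _ _).trans (by simp)
  by_cases hc : ∃ u ∈ S, ∃ v, v ∉ S ∧ pd r s v u = m + q
  · obtain ⟨u, huS, v, hvS, hvd⟩ := hc
    refine ⟨v, hvS, ?_⟩
    have hsub : {w | w ∉ S ∧ ∀ z ∈ S, pd r s v z = pd r s w z} ⊆
        {(u.1 + ((m:ℕ) : Fin r), u.2 + ((q:ℕ) : Fin s)),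
         (u.1 + ((m:ℕ) : Fin r), u.2 - ((q:ℕ) : Fin s))} := by
      rintro w ⟨hwS, hw⟩
      have hd : pd r s w u = m + q := by rw [← hw u huS, hvd]
      have : w ∈ {w | pd r s w u = m + q} := hd
      rwa [ecc_level hre hm hsq hq u] at this
    exact (Set.ncard_le_ncard hsub (Set.toFinite _)).trans (pair_le _ _)
  · push_neg at hc
    have step : ∀ p ∈ S, (p.1 + ((m:ℕ) : Fin r), p.2 + ((q:ℕ) : Fin s)) ∈ S := by
      intro p hp
      by_contra hnot
      refine hc p hp _ hnot ?_
      show cd r (p.1 + ((m:ℕ):Fin r)) p.1 + cd s (p.2 + ((q:ℕ):Fin s)) p.2 = m + q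
      rw [cd_shift _ (by omega), cd_shift _ (by omega)]
    have hdouble : ∀ p ∈ S, ((p.1 : Fin r), p.2 - 1) ∈ S := by
      intro p hp
      have h2 := step _ (step p hp)
      have e1 : p.1 + ((m:ℕ):Fin r) + ((m:ℕ):Fin r) = p.1 := by
        have hz : ((m:ℕ):Fin r) + ((m:ℕ):Fin r) = 0 := by
          apply Fin.ext
          have hmv : (((m:ℕ) : Fin r) : ℕ) = m := Fin.val_cast_of_lt (by omega)
          rw [add_val, hmv]
          simp only [Fin.val_zero]
          split_ifs <;> omega
        rw [add_assoc, hz, add_zero]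
      have e2 : p.2 + ((q:ℕ):Fin s) + ((q:ℕ):Fin s) = p.2 - 1 := by
        apply Fin.ext
        have hqv : (((q:ℕ) : Fin s) : ℕ) = q := Fin.val_cast_of_lt (by omega)
        have h1v : ((1 : Fin s) : ℕ) = 1 := by
          rw [Fin.val_one']
          exact Nat.mod_eq_of_lt (by omega)
        have hp2 : (p.2 : ℕ) < s := p.2.isLt
        rw [sub_val, add_val, add_val, hqv, h1v]
        split_ifs <;> omega
      simpa only [e1, e2] using h2
    obtain ⟨u0, hu0⟩ := hSne
    have hline : ∀ k : ℕ, ((u0.1 : Fin r), u0.2 - ((k:ℕ) : Fin s)) ∈ S := by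
      intro k
      induction k with
      | zero => simpa using hu0
      | succ k ih =>
        have := hdouble _ ih
        have e : (u0.2 - ((k:ℕ):Fin s)) - 1 = u0.2 - (((k+1 : ℕ)) : Fin s) := by
          push_cast
          ring
        rwa [e] at this
    have hlineAll : ∀ d : Fin s, ((u0.1 : Fin r), d) ∈ S := by
      intro d
      have := hline ((u0.2 - d).val)
      rwa [Fin.cast_val_eq_self, sub_sub_cancel] at this
    obtain ⟨y, hy⟩ := hSc
    rw [Set.mem_compl_iff] at hy
    refine ⟨y, hy, ?_⟩
    have hsub : {w | w ∉ S ∧ ∀ z ∈ S, pd r s y z = pd r s w z} ⊆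
        {y, (u0.1 - (y.1 - u0.1), y.2)} := by
      rintro w ⟨hwS, hw⟩
      have h1 := hw (u0.1, w.2) (hlineAll _)
      have h2 := hw (u0.1, y.2) (hlineAll _)
      simp only [pd] at h1 h2
      have hz1 : cd s w.2 w.2 = 0 := (cd_eq_zero _ _).mpr rfl
      have hz2 : cd s y.2 y.2 = 0 := (cd_eq_zero _ _).mpr rfl
      have hcm : cd s y.2 w.2 = cd s w.2 y.2 := cd_comm _ _
      have hC : cd s y.2 w.2 = 0 := by omega
      have hA : cd r w.1 u0.1 = cd r y.1 u0.1 := by omega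
      have hw2 : w.2 = y.2 := ((cd_eq_zero _ _).mp hC).symm
      rcases cd_eq_cd u0.1 w.1 y.1 hA with h | h
      · exact Or.inl (Prod.ext h hw2)
      · exact Or.inr (Prod.ext h hw2)
    exact (Set.ncard_le_ncard hsub (Set.toFinite _)).trans (pair_le _ _)

lemma swap_inj {α β : Type*} {a b : α × β} (h : a.swap = b.swap) : a = b := by
  simpa using congrArg Prod.swap h

lemma pd_swap' (x : Fin s × Fin r) (y : Fin r × Fin s) :
    pd r s x.swap y = pd s r x y.swap := by
  rw [← pd_swap x y.swap, Prod.swap_swap]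

lemma parity_cases {r s : ℕ} (hpar : ¬(Even r ↔ Even s)) :
    (Even r ∧ Odd s) ∨ (Odd r ∧ Even s) := by
  rcases Nat.even_or_odd r with h1 | h1 <;> rcases Nat.even_or_odd s with h2 | h2
  · exact absurd ⟨fun _ => h2, fun _ => h1⟩ hpar
  · exact Or.inl ⟨h1, h2⟩
  · exact Or.inr ⟨h1, h2⟩
  · exact absurd ⟨fun h => absurd h (Nat.not_even_iff_odd.mpr h1),
      fun h => absurd h (Nat.not_even_iff_odd.mpr h2)⟩ hpar

/-- general-parity version of L1 -/
lemma level_two' (hr : 3 ≤ r) (hs : 3 ≤ s) (hpar : ¬(Even r ↔ Even s))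
    (x y : Fin r × Fin s) (hxy : y ≠ x) :
    ∃ u v : Fin r × Fin s, u ≠ v ∧ u ≠ x ∧ v ≠ x ∧
      pd r s u x = pd r s y x ∧ pd r s v x = pd r s y x := by
  rcases parity_cases hpar with ⟨_, hos⟩ | ⟨hor, _⟩
  · obtain ⟨q, hq⟩ := hos
    exact level_two hr (show s = 2*q+1 by omega) (by omega) x y hxy
  · obtain ⟨q, hq⟩ := hor
    obtain ⟨u, v, huv, hux, hvx, hu, hv⟩ :=
      level_two hs (show r = 2*q+1 by omega) (by omega) x.swap y.swap
        (fun h => hxy (swap_inj h))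
    refine ⟨u.swap, v.swap, fun h => huv (swap_inj h),
      fun h => hux (by rw [← h, Prod.swap_swap]),
      fun h => hvx (by rw [← h, Prod.swap_swap]), ?_, ?_⟩
    · rw [pd_swap' u x, hu, pd_swap y x]
    · rw [pd_swap' v x, hv, pd_swap y x]

/-- general-parity version of L2 -/
lemma ecc_pair' (hr : 3 ≤ r) (hs : 3 ≤ s) (hpar : ¬(Even r ↔ Even s))
    (x : Fin r × Fin s) :
    ∃ p p' : Fin r × Fin s, p ≠ p' ∧ p ≠ x ∧ p' ≠ x ∧
      {w | w ≠ x ∧ pd r s p x = pd r s w x} = {p, p'} := by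
  haveI : NeZero r := ⟨by omega⟩
  haveI : NeZero s := ⟨by omega⟩
  rcases parity_cases hpar with ⟨her, hos⟩ | ⟨hor, hes⟩
  · obtain ⟨m, hm⟩ := her
    obtain ⟨q, hq⟩ := hos
    exact ecc_pair (show r = 2*m by omega) (by omega) (show s = 2*q+1 by omega) (by omega) x
  · obtain ⟨m, hm⟩ := hes
    obtain ⟨q, hq⟩ := hor
    obtain ⟨p₀, p₁, hne, h0x, h1x, E⟩ :=
      ecc_pair (show s = 2*m by omega) (by omega) (show r = 2*q+1 by omega) (by omega) x.swap
    have mem1 : pd s r p₀ x.swap = pd s r p₁ x.swap :=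
      ((Set.ext_iff.mp E p₁).mpr (by simp)).2
    refine ⟨p₀.swap, p₁.swap, fun h => hne (swap_inj h),
      fun h => h0x (by rw [← h, Prod.swap_swap]),
      fun h => h1x (by rw [← h, Prod.swap_swap]), ?_⟩
    ext w
    simp only [Set.mem_setOf_eq, Set.mem_insert_iff, Set.mem_singleton_iff]
    constructor
    · rintro ⟨h1, h2⟩
      have hw : w.swap ∈ {w' | w' ≠ x.swap ∧ pd s r p₀ x.swap = pd s r w' x.swap} := by
        refine ⟨fun hh => h1 (swap_inj hh), ?_⟩
        rw [pd_swap w x, ← pd_swap' p₀ x]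
        exact h2
      have := (Set.ext_iff.mp E w.swap).mp hw
      rcases this with h | h
      · left; rw [← h, Prod.swap_swap]
      · right; rw [← h, Prod.swap_swap]
    · intro h
      rcases h with h | h <;> subst h
      · exact ⟨fun hh => h0x (by rw [← hh, Prod.swap_swap]), rfl⟩
      · refine ⟨fun hh => h1x (by rw [← hh, Prod.swap_swap]), ?_⟩
        rw [pd_swap' p₀ x, pd_swap' p₁ x]
        exact mem1

/-- general-parity version of L3 -/
lemma class_le_two' (hr : 3 ≤ r) (hs : 3 ≤ s) (hpar : ¬(Even r ↔ Even s))
    (S : Set (Fin r × Fin s)) (hSne : S.Nonempty) (hSc : Sᶜ.Nonempty) :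
    ∃ y ∉ S, {w | w ∉ S ∧ ∀ z ∈ S, pd r s y z = pd r s w z}.ncard ≤ 2 := by
  rcases parity_cases hpar with ⟨her, hos⟩ | ⟨hor, hes⟩
  · obtain ⟨m, hm⟩ := her
    obtain ⟨q, hq⟩ := hos
    exact class_le_two (show r = 2*m by omega) (by omega) (show s = 2*q+1 by omega)
      (by omega) S hSne hSc
  · obtain ⟨m, hm⟩ := hes
    obtain ⟨q, hq⟩ := hor
    set S' : Set (Fin s × Fin r) := Prod.swap '' S with hS'
    have hS'ne : S'.Nonempty := hSne.image _
    have hS'c : S'ᶜ.Nonempty := by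
      obtain ⟨x, hx⟩ := hSc
      refine ⟨x.swap, fun hh => ?_⟩
      obtain ⟨a, haS, hae⟩ := hh
      exact hx (swap_inj hae ▸ haS)
    obtain ⟨y', hy', hcard⟩ :=
      class_le_two (show s = 2*m by omega) (by omega) (show r = 2*q+1 by omega)
        (by omega) S' hS'ne hS'c
    refine ⟨y'.swap, fun hh => hy' ⟨y'.swap, hh, Prod.swap_swap _⟩, ?_⟩
    have hset : {w | w ∉ S ∧ ∀ z ∈ S, pd r s y'.swap z = pd r s w z} =
        Prod.swap '' {w' | w' ∉ S' ∧ ∀ z' ∈ S', pd s r y' z' = pd s r w' z'} := by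
      ext w
      constructor
      · rintro ⟨hw1, hw2⟩
        refine ⟨w.swap, ⟨?_, ?_⟩, Prod.swap_swap w⟩
        · rintro ⟨a, haS, hae⟩
          exact hw1 (swap_inj hae ▸ haS)
        · rintro z' ⟨z, hzS, rfl⟩
          have := hw2 z hzS
          rw [pd_swap' y' z] at this
          rw [this, pd_swap w z]
      · rintro ⟨w', ⟨h1, h2⟩, rfl⟩
        refine ⟨fun hh => h1 ⟨w'.swap, hh, Prod.swap_swap w'⟩, ?_⟩
        intro z hz
        have := h2 z.swap ⟨z, hz, rfl⟩
        rw [pd_swap' y' z, this, ← pd_swap' w' z]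
    rw [hset, Set.ncard_image_of_injective _ Prod.swap_injective]
    exact hcard

end Tor

/-- For `r, s ≥ 3` of distinct parity, every single vertex of `C_r □ C_s` is a 2-ARS,
hence `adim_2(C_r □ C_s) = 1`, and `C_r □ C_s` is 2-metric antidimensional. -/
theorem stmt8 (r s : ℕ) (hr : 3 ≤ r) (hs : 3 ≤ s) (hpar : ¬(Even r ↔ Even s)) :
    (∀ x : Fin r × Fin s, IsKARS ((cycleGraph r).boxProd (cycleGraph s)) 2 {x}) ∧
    adim ((cycleGraph r).boxProd (cycleGraph s)) 2 = 1 ∧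
    (∃ S : Set (Fin r × Fin s), IsKARS ((cycleGraph r).boxProd (cycleGraph s)) 2 S) ∧
    ∀ k, 2 < k → ¬∃ S : Set (Fin r × Fin s),
      IsKARS ((cycleGraph r).boxProd (cycleGraph s)) k S := by
  haveI : NeZero r := ⟨by omega⟩
  haveI : NeZero s := ⟨by omega⟩
  set G := (cycleGraph r).boxProd (cycleGraph s) with hG
  have hdist : ∀ x y : Fin r × Fin s, G.dist x y = Tor.pd r s x y := by
    intro x y
    rw [hG, Tor.boxProd_dist (Tor.cycle_connected hr) (Tor.cycle_connected hs),
      Tor.cycle_dist hr, Tor.cycle_dist hs]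
    rfl
  have hcls1 : ∀ x y : Fin r × Fin s, cls G {x} y =
      {w | w ≠ x ∧ Tor.pd r s y x = Tor.pd r s w x} := by
    intro x y
    ext w
    simp [cls, sameDists, hdist]
  have hclsS : ∀ (S : Set (Fin r × Fin s)) (y : Fin r × Fin s), cls G S y =
      {w | w ∉ S ∧ ∀ z ∈ S, Tor.pd r s y z = Tor.pd r s w z} := by
    intro S y
    ext w
    simp [cls, sameDists, hdist]
  have part1 : ∀ x : Fin r × Fin s, IsKARS G 2 {x} := by
    intro x
    obtain ⟨p, p', hpp, hpx, hp'x, E⟩ := Tor.ecc_pair' hr hs hpar x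
    refine ⟨⟨x, rfl⟩, ⟨p, hpx⟩, ?_, ⟨p, hpx, ?_⟩⟩
    · intro y hy
      rw [hcls1]
      obtain ⟨u, v, huv, hux, hvx, hu, hv⟩ :=
        Tor.level_two' hr hs hpar x y (by simpa using hy)
      have h2 : 1 < {w | w ≠ x ∧ Tor.pd r s y x = Tor.pd r s w x}.ncard := by
        rw [Set.one_lt_ncard (Set.toFinite _)]
        exact ⟨u, ⟨hux, hu.symm⟩, v, ⟨hvx, hv.symm⟩, huv⟩
      omega
    · rw [hcls1 x p, E]
      exact Set.ncard_pair hpp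
  have part2 : adim G 2 = 1 := by
    apply le_antisymm
    · have hmem : (1 : ℕ∞) ∈ (fun S => (S.ncard : ℕ∞)) '' {S | IsKARS G 2 S} :=
        ⟨{((0 : Fin r), (0 : Fin s))}, part1 _, by simp⟩
      exact sInf_le hmem
    · apply le_sInf
      rintro a ⟨S, hS, rfl⟩
      have h1 : 1 ≤ S.ncard := (Set.ncard_pos (Set.toFinite _)).mpr hS.1
      show (1 : ℕ∞) ≤ (S.ncard : ℕ∞)
      exact_mod_cast h1
  refine ⟨part1, part2, ⟨{((0 : Fin r), (0 : Fin s))}, part1 _⟩, ?_⟩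
  rintro k hk ⟨S, h1, h2, h3, -⟩
  obtain ⟨y, hy, hle⟩ := Tor.class_le_two' hr hs hpar S h1 h2
  have hy2 := h3 y hy
  rw [hclsS] at hy2
  omega
end

section
/- For r ≥ 2 and s ≥ 3 with r,s both odd, any vertex (u_{(r+1)/2}, v_j) on the middle path-layer of the cylinder P_r □ C_s is a 4-antiresolving set, hence adim_4(P_r □ C_s) = 1. -/
open SimpleGraph

set_option maxHeartbeats 1000000

open Fin.NatCast

/-- `|a - b|` on ℕ. -/
def nd (a b : ℕ) : ℕ := (a - b) + (b - a)

/-- cycle distance on ℕ indices. -/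
def cd (s a b : ℕ) : ℕ := min (nd a b) (s - nd a b)

/-- product distance. -/
def DD (r s : ℕ) (x y : Fin r × Fin s) : ℕ := nd x.1.val y.1.val + cd s x.2.val y.2.val

lemma mod_two_cases (x s : ℕ) (hs : 0 < s) (h : x < 2 * s) :
    x % s = x ∧ x < s ∨ x % s = x - s ∧ s ≤ x := by
  rcases lt_or_ge x s with h' | h'
  · exact Or.inl ⟨Nat.mod_eq_of_lt h', h'⟩
  · exact Or.inr ⟨by rw [Nat.mod_eq_sub_mod h', Nat.mod_eq_of_lt (by omega)], h'⟩

lemma fin_sub_val {s : ℕ} (u v : Fin s) :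
    (u - v).val = if v.val ≤ u.val then u.val - v.val else u.val + s - v.val := by
  have h1 := u.isLt; have h2 := v.isLt
  rw [Fin.sub_def]
  rcases mod_two_cases (s - v.val + u.val) s (by omega) (by omega) with ⟨h, h'⟩ | ⟨h, h'⟩ <;>
    simp only [h] <;> split <;> omega

lemma fin_add_cast_val {s : ℕ} [NeZero s] (j : Fin s) (b : ℕ) (hb : b < s) :
    (j + (b : Fin s)).val = (j.val + b) % s := by
  rw [Fin.val_add, Fin.val_natCast, Nat.mod_eq_of_lt hb]

lemma fin_sub_cast_val {s : ℕ} [NeZero s] (j : Fin s) (b : ℕ) (hb : b < s) :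
    (j - (b : Fin s)).val = (s - b + j.val) % s := by
  rw [Fin.sub_def]
  simp [Fin.val_natCast, Nat.mod_eq_of_lt hb]

section walks
variable {r s : ℕ}

lemma path_walk_up : ∀ (n : ℕ) (i k : Fin r), k.val = i.val + n →
    ∃ w : (pathGraph r).Walk i k, w.length = n := by
  intro n
  induction n with
  | zero =>
    intro i k h
    have : i = k := Fin.ext (by omega)
    subst this
    exact ⟨.nil, rfl⟩
  | succ n ih =>
    intro i k h
    have hlt : i.val + 1 < r := by have := k.isLt; omega
    obtain ⟨w, hw⟩ := ih ⟨i.val + 1, hlt⟩ k (by simp; omega)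
    exact ⟨.cons (by rw [pathGraph_adj]; left; rfl) w, by simp [hw]⟩

lemma path_dist_le (i k : Fin r) : (pathGraph r).dist i k ≤ nd i.val k.val := by
  rcases le_or_gt i.val k.val with h | h
  · obtain ⟨w, hw⟩ := path_walk_up (k.val - i.val) i k (by omega)
    calc (pathGraph r).dist i k ≤ w.length := SimpleGraph.dist_le w
    _ = nd i.val k.val := by unfold nd; omega
  · obtain ⟨w, hw⟩ := path_walk_up (i.val - k.val) k i (by omega)
    calc (pathGraph r).dist i k ≤ w.reverse.length := SimpleGraph.dist_le w.reverse
    _ = nd i.val k.val := by rw [Walk.length_reverse]; unfold nd; omega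

lemma cyc_walk_add [NeZero s] (hs : 2 ≤ s) : ∀ (t : ℕ) (j : Fin s),
    ∃ w : (cycleGraph s).Walk j (j + (t : Fin s)), w.length = t := by
  intro t
  induction t with
  | zero => intro j; exact ⟨Walk.nil.copy rfl (by simp), by simp⟩
  | succ t ih =>
    intro j
    obtain ⟨w, hw⟩ := ih (j + 1)
    have hadj : (cycleGraph s).Adj j (j + 1) := by
      rw [cycleGraph_adj']
      right
      rw [add_sub_cancel_left, Fin.val_one', Nat.mod_eq_of_lt (by omega)]
    refine ⟨(Walk.cons hadj w).copy rfl ?_, ?_⟩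
    · rw [Nat.cast_add, Nat.cast_one]; abel
    · rw [Walk.length_copy, Walk.length_cons, hw]

lemma cyc_dist_le_s10 (hs : 2 ≤ s) (u v : Fin s) :
    (cycleGraph s).dist u v ≤ cd s u.val v.val := by
  haveI : NeZero s := ⟨by omega⟩
  have key : ∀ a b : Fin s, (cycleGraph s).dist a b ≤ (b - a).val := by
    intro a b
    obtain ⟨w, hw⟩ := cyc_walk_add hs (b - a).val a
    have h : a + ((b - a).val : Fin s) = b := by simp
    calc (cycleGraph s).dist a b ≤ (w.copy rfl h).length := SimpleGraph.dist_le _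
    _ = _ := by simpa using hw
  have h1 := key u v
  have h2 := key v u
  rw [SimpleGraph.dist_comm] at h2
  have e1 := fin_sub_val v u
  have e2 := fin_sub_val u v
  have := u.isLt; have := v.isLt
  unfold cd nd
  split at e1 <;> split at e2 <;> omega

end walks

section distform
variable {r s : ℕ}

lemma DD_self (x : Fin r × Fin s) : DD r s x x = 0 := by
  have := x.2.isLt
  simp only [DD, cd, nd]
  omega

lemma DD_eq_zero {x y : Fin r × Fin s} (h : DD r s x y = 0) : x = y := by
  have h1 := x.2.isLt; have h2 := y.2.isLt
  simp only [DD, cd, nd] at h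
  have : x.1.val = y.1.val ∧ x.2.val = y.2.val := by omega
  exact Prod.ext (Fin.ext this.1) (Fin.ext this.2)

lemma lip (hs : 3 ≤ s) {x y : Fin r × Fin s}
    (h : ((pathGraph r).boxProd (cycleGraph s)).Adj x y) (z : Fin r × Fin s) :
    DD r s x z ≤ DD r s y z + 1 := by
  have hx1 := x.1.isLt; have hx2 := x.2.isLt
  have hy2 := y.2.isLt; have hz2 := z.2.isLt
  rcases h with ⟨hp, he⟩ | ⟨hc, he⟩
  · rw [pathGraph_adj] at hp
    simp only [DD, cd, nd]
    rw [he]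
    omega
  · rw [cycleGraph_adj'] at hc
    have e1 := fin_sub_val x.2 y.2
    have e2 := fin_sub_val y.2 x.2
    simp only [DD, cd, nd]
    rw [he]
    split at e1 <;> split at e2 <;> omega

lemma walk_lb (hs : 3 ≤ s) {x y : Fin r × Fin s}
    (w : ((pathGraph r).boxProd (cycleGraph s)).Walk x y) : DD r s x y ≤ w.length := by
  induction w with
  | nil => rw [DD_self]; omega
  | cons h p ih =>
    rw [Walk.length_cons]
    calc DD r s _ _ ≤ DD r s _ _ + 1 := lip hs h _
    _ ≤ p.length + 1 := by omega

lemma dist_formula (hr : 1 ≤ r) (hs : 3 ≤ s) (x y : Fin r × Fin s) :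
    ((pathGraph r).boxProd (cycleGraph s)).dist x y = DD r s x y := by
  haveI : NeZero s := ⟨by omega⟩
  -- upper bound walk
  obtain ⟨w1, hw1⟩ : ∃ w : (pathGraph r).Walk x.1 y.1, w.length = nd x.1.val y.1.val := by
    rcases le_or_gt x.1.val y.1.val with h | h
    · obtain ⟨w, hw⟩ := path_walk_up (y.1.val - x.1.val) x.1 y.1 (by omega)
      exact ⟨w, by unfold nd; omega⟩
    · obtain ⟨w, hw⟩ := path_walk_up (x.1.val - y.1.val) y.1 x.1 (by omega)
      exact ⟨w.reverse, by rw [Walk.length_reverse]; unfold nd; omega⟩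
  obtain ⟨w2, hw2⟩ : ∃ w : (cycleGraph s).Walk x.2 y.2, w.length = cd s x.2.val y.2.val := by
    have key : ∀ a b : Fin s, ∃ w : (cycleGraph s).Walk a b, w.length = (b - a).val := by
      intro a b
      obtain ⟨w, hw⟩ := cyc_walk_add (show 2 ≤ s by omega) (b - a).val a
      exact ⟨w.copy rfl (by simp), by simpa using hw⟩
    have e1 := fin_sub_val y.2 x.2
    have e2 := fin_sub_val x.2 y.2
    have h1 := x.2.isLt; have h2 := y.2.isLt
    rcases le_or_gt (y.2 - x.2).val (x.2 - y.2).val with h | h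
    · obtain ⟨w, hw⟩ := key x.2 y.2
      refine ⟨w, ?_⟩
      rw [hw]
      simp only [cd, nd]
      split at e1 <;> split at e2 <;> omega
    · obtain ⟨w, hw⟩ := key y.2 x.2
      refine ⟨w.reverse, ?_⟩
      rw [Walk.length_reverse, hw]
      simp only [cd, nd]
      split at e1 <;> split at e2 <;> omega
  apply le_antisymm
  · calc ((pathGraph r).boxProd (cycleGraph s)).dist x y
        ≤ ((w1.boxProdLeft (cycleGraph s) x.2).append
            (w2.boxProdRight (pathGraph r) y.1)).length :=
          SimpleGraph.dist_le _
    _ = DD r s x y := by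
        refine (Walk.length_append _ _).trans ?_
        exact congrArg₂ (· + ·) ((Walk.length_map _ _).trans hw1) ((Walk.length_map _ _).trans hw2)
  · have hreach : ((pathGraph r).boxProd (cycleGraph s)).Reachable x y :=
      ⟨(w1.boxProdLeft (cycleGraph s) x.2).append (w2.boxProdRight (pathGraph r) y.1)⟩
    obtain ⟨p, hp⟩ := hreach.exists_walk_length_eq_dist
    rw [← hp]
    exact walk_lb hs p
end distform

section comb
variable {r s : ℕ}

lemma cd_add [NeZero s] (hs : 3 ≤ s) (j : Fin s) (b : ℕ) (hb : 2 * b < s) :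
    cd s (j + (b : Fin s)).val j.val = b := by
  rw [fin_add_cast_val _ _ (by omega)]
  have hj := j.isLt
  rcases mod_two_cases (j.val + b) s (by omega) (by omega) with ⟨e, f⟩ | ⟨e, f⟩ <;>
    simp only [cd, nd] <;> omega

lemma cd_sub [NeZero s] (hs : 3 ≤ s) (j : Fin s) (b : ℕ) (hb : 2 * b < s) :
    cd s (j - (b : Fin s)).val j.val = b := by
  rw [fin_sub_cast_val _ _ (by omega)]
  have hj := j.isLt
  rcases mod_two_cases (s - b + j.val) s (by omega) (by omega) with ⟨e, f⟩ | ⟨e, f⟩ <;>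
    simp only [cd, nd] <;> omega

lemma add_ne_sub [NeZero s] (hs : 3 ≤ s) (j : Fin s) (b b' : ℕ) (h1 : 1 ≤ b + b') (h2 : b + b' < s)
    (hb : b < s) (hb' : b' < s) : j + (b : Fin s) ≠ j - (b' : Fin s) := by
  intro he
  have hv := congrArg Fin.val he
  rw [fin_add_cast_val _ _ hb, fin_sub_cast_val _ _ hb'] at hv
  have hj := j.isLt
  rcases mod_two_cases (j.val + b) s (by omega) (by omega) with ⟨e1, f1⟩ | ⟨e1, f1⟩ <;>
    rcases mod_two_cases (s - b' + j.val) s (by omega) (by omega) with ⟨e2, f2⟩ | ⟨e2, f2⟩ <;>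
    omega

lemma ge_four_aux (hr : 2 ≤ r) (hs : 3 ≤ s) [NeZero s] (hro : Odd r) (hso : Odd s)
    (c : Fin r × Fin s) (hc : c.1.val = (r - 1) / 2) (t : ℕ)
    (ht1 : 1 ≤ t) (ht2 : t ≤ (r - 1) / 2 + (s - 1) / 2) :
    ∃ p1 p2 p3 p4 : Fin r × Fin s,
      p1 ≠ p2 ∧ p1 ≠ p3 ∧ p1 ≠ p4 ∧ p2 ≠ p3 ∧ p2 ≠ p4 ∧ p3 ≠ p4 ∧
      DD r s p1 c = t ∧ DD r s p2 c = t ∧ DD r s p3 c = t ∧ DD r s p4 c = t := by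
  obtain ⟨mm, hmm⟩ := hro
  obtain ⟨hh, hhh⟩ := hso
  set m := (r - 1) / 2 with hmdef
  set h := (s - 1) / 2 with hhdef
  obtain ⟨c1, j⟩ := c
  simp only at hc
  have hrm : r = 2 * m + 1 := by omega
  have hsm : s = 2 * h + 1 := by omega
  have hm1 : 1 ≤ m := by omega
  have hh1 : 1 ≤ h := by omega
  rcases eq_or_lt_of_le ht1 with ht | ht
  · -- t = 1
    refine ⟨(⟨m - 1, by omega⟩, j), (⟨m + 1, by omega⟩, j),
      (⟨m, by omega⟩, j + ((1 : ℕ) : Fin s)), (⟨m, by omega⟩, j - ((1 : ℕ) : Fin s)),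
      ?_, ?_, ?_, ?_, ?_, ?_, ?_, ?_, ?_, ?_⟩
    · simp only [ne_eq, Prod.mk.injEq, Fin.mk.injEq, not_and]; omega
    · simp only [ne_eq, Prod.mk.injEq, Fin.mk.injEq, not_and]; omega
    · simp only [ne_eq, Prod.mk.injEq, Fin.mk.injEq, not_and]; omega
    · simp only [ne_eq, Prod.mk.injEq, Fin.mk.injEq, not_and]; omega
    · simp only [ne_eq, Prod.mk.injEq, Fin.mk.injEq, not_and]; omega
    · simp only [ne_eq, Prod.mk.injEq]
      exact fun hp => add_ne_sub hs j 1 1 (by omega) (by omega) (by omega) (by omega) hp.2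
    · simp only [DD]
      have : cd s j.val j.val = 0 := by simp only [cd, nd]; omega
      simp only [this, nd]; omega
    · simp only [DD]
      have : cd s j.val j.val = 0 := by simp only [cd, nd]; omega
      simp only [this, nd]; omega
    · simp only [DD, cd_add hs j 1 (by omega), nd]; omega
    · simp only [DD, cd_sub hs j 1 (by omega), nd]; omega
  · -- t ≥ 2
    set a := max 1 (t - h) with ha
    set b := t - a with hb
    have ha1 : 1 ≤ a := le_max_left _ _
    have ham : a ≤ m := by omega
    have hb1 : 1 ≤ b := by omega
    have hbh : b ≤ h := by omega
    refine ⟨(⟨m - a, by omega⟩, j + (b : Fin s)), (⟨m - a, by omega⟩, j - (b : Fin s)),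
      (⟨m + a, by omega⟩, j + (b : Fin s)), (⟨m + a, by omega⟩, j - (b : Fin s)),
      ?_, ?_, ?_, ?_, ?_, ?_, ?_, ?_, ?_, ?_⟩
    · simp only [ne_eq, Prod.mk.injEq]
      exact fun hp => add_ne_sub hs j b b (by omega) (by omega) (by omega) (by omega) hp.2
    · simp only [ne_eq, Prod.mk.injEq, Fin.mk.injEq, not_and]; omega
    · simp only [ne_eq, Prod.mk.injEq, Fin.mk.injEq, not_and]; omega
    · simp only [ne_eq, Prod.mk.injEq, Fin.mk.injEq, not_and]; omega
    · simp only [ne_eq, Prod.mk.injEq, Fin.mk.injEq, not_and]; omega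
    · simp only [ne_eq, Prod.mk.injEq]
      exact fun hp => add_ne_sub hs j b b (by omega) (by omega) (by omega) (by omega) hp.2
    · simp only [DD, cd_add hs j b (by omega), nd]; omega
    · simp only [DD, cd_sub hs j b (by omega), nd]; omega
    · simp only [DD, cd_add hs j b (by omega), nd]; omega
    · simp only [DD, cd_sub hs j b (by omega), nd]; omega

lemma DD_le_bound (hr : 2 ≤ r) (hs : 3 ≤ s) (hro : Odd r) (hso : Odd s)
    (c : Fin r × Fin s) (hc : c.1.val = (r - 1) / 2)
    (y : Fin r × Fin s) : DD r s y c ≤ (r - 1) / 2 + (s - 1) / 2 := by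
  obtain ⟨mm, hmm⟩ := hro
  obtain ⟨hh, hhh⟩ := hso
  have h1 := y.1.isLt
  have h2 := y.2.isLt
  have h3 := c.2.isLt
  simp only [DD, cd, nd]
  omega

end comb

section main
variable {r s : ℕ}

lemma cls_singleton {V : Type*} (G : SimpleGraph V) (c x : V) :
    cls G {c} x = {y | y ≠ c ∧ G.dist y c = G.dist x c} := by
  ext y
  constructor
  · rintro ⟨h1, h2⟩
    exact ⟨fun h => h1 (by simp [h]), (h2 c rfl).symm⟩
  · rintro ⟨h1, h2⟩
    refine ⟨by simpa using h1, fun z hz => ?_⟩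
    rw [Set.mem_singleton_iff] at hz
    subst hz
    exact h2.symm

lemma ncard_four {α : Type*} [Finite α] {p1 p2 p3 p4 : α} (h12 : p1 ≠ p2) (h13 : p1 ≠ p3)
    (h14 : p1 ≠ p4) (h23 : p2 ≠ p3) (h24 : p2 ≠ p4) (h34 : p3 ≠ p4) :
    ({p1, p2, p3, p4} : Set α).ncard = 4 := by
  rw [Set.ncard_insert_of_notMem (by simp [h12, h13, h14]),
    Set.ncard_insert_of_notMem (by simp [h23, h24]), Set.ncard_pair h34]

lemma ncard_ge_four {α : Type*} [Finite α] {S : Set α} {p1 p2 p3 p4 : α} (h12 : p1 ≠ p2)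
    (h13 : p1 ≠ p3) (h14 : p1 ≠ p4) (h23 : p2 ≠ p3) (h24 : p2 ≠ p4) (h34 : p3 ≠ p4)
    (m1 : p1 ∈ S) (m2 : p2 ∈ S) (m3 : p3 ∈ S) (m4 : p4 ∈ S) : 4 ≤ S.ncard := by
  have hsub : ({p1, p2, p3, p4} : Set α) ⊆ S := by
    simp [Set.insert_subset_iff, m1, m2, m3, m4]
  calc 4 = ({p1, p2, p3, p4} : Set α).ncard := (ncard_four h12 h13 h14 h23 h24 h34).symm
  _ ≤ S.ncard := Set.ncard_le_ncard hsub (Set.toFinite S)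

lemma sphere_max (hr : 2 ≤ r) (hs : 3 ≤ s) [NeZero s] (hro : Odd r) (hso : Odd s)
    (c : Fin r × Fin s) (hc : c.1.val = (r - 1) / 2) :
    {y : Fin r × Fin s | y ≠ c ∧ DD r s y c = (r - 1) / 2 + (s - 1) / 2} =
    {((⟨0, by omega⟩ : Fin r), c.2 + ((((s - 1) / 2 : ℕ)) : Fin s)),
     ((⟨0, by omega⟩ : Fin r), c.2 - ((((s - 1) / 2 : ℕ)) : Fin s)),
     ((⟨r - 1, by omega⟩ : Fin r), c.2 + ((((s - 1) / 2 : ℕ)) : Fin s)),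
     ((⟨r - 1, by omega⟩ : Fin r), c.2 - ((((s - 1) / 2 : ℕ)) : Fin s))} := by
  obtain ⟨mm, hmm⟩ := hro
  obtain ⟨hh, hhh⟩ := hso
  set m := (r - 1) / 2 with hmdef
  set h := (s - 1) / 2 with hhdef
  have hrm : r = 2 * m + 1 := by omega
  have hsm : s = 2 * h + 1 := by omega
  have hm1 : 1 ≤ m := by omega
  have hh1 : 1 ≤ h := by omega
  obtain ⟨c1, j⟩ := c
  simp only at hc ⊢
  have e1 := fin_add_cast_val j h (by omega)
  have e2 := fin_sub_cast_val j h (by omega)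
  have hj := j.isLt
  have hccd : ∀ y2 : Fin s, cd s y2.val j.val = h ↔
      (y2 = j + (h : Fin s) ∨ y2 = j - (h : Fin s)) := by
    intro y2
    have h2 := y2.isLt
    rw [Fin.ext_iff, Fin.ext_iff, e1, e2]
    rcases mod_two_cases (j.val + h) s (by omega) (by omega) with ⟨f1, g1⟩ | ⟨f1, g1⟩ <;>
      rcases mod_two_cases (s - h + j.val) s (by omega) (by omega) with ⟨f2, g2⟩ | ⟨f2, g2⟩ <;>
      simp only [cd, nd] <;> omega
  ext ⟨y1, y2⟩
  simp only [Set.mem_setOf_eq, Set.mem_insert_iff, Set.mem_singleton_iff, Prod.mk.injEq]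
  constructor
  · rintro ⟨hne, hdd⟩
    have h1 := y1.isLt
    have h2 := y2.isLt
    have hcdle : cd s y2.val j.val ≤ h := by simp only [cd, nd]; omega
    have hndle : nd y1.val c1.val ≤ m := by simp only [nd]; omega
    simp only [DD] at hdd
    have hy1 : y1 = (⟨0, by omega⟩ : Fin r) ∨ y1 = (⟨r - 1, by omega⟩ : Fin r) := by
      rw [Fin.ext_iff, Fin.ext_iff]
      show y1.val = 0 ∨ y1.val = r - 1
      simp only [nd] at hdd hndle
      omega
    have hy2 : y2 = j + (h : Fin s) ∨ y2 = j - (h : Fin s) := by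
      rw [← hccd]
      simp only [nd] at hdd hndle
      omega
    tauto
  · intro hmem
    have hdd : DD r s (y1, y2) (c1, j) = m + h := by
      rcases hmem with ⟨hA, hB⟩ | ⟨hA, hB⟩ | ⟨hA, hB⟩ | ⟨hA, hB⟩ <;> subst hA <;> subst hB <;>
        simp only [DD, cd_add hs j h (by omega), cd_sub hs j h (by omega), nd] <;> omega
    refine ⟨?_, hdd⟩
    intro he
    rw [he, DD_self] at hdd
    omega

end main

/-- For odd `r, s` with `r ≥ 2`, `s ≥ 3`, any vertex `(u_{(r+1)/2}, v_j)` on the middle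
path-layer of the cylinder `P_r □ C_s` is a 4-ARS, hence `adim_4(P_r □ C_s) = 1`.
(With vertices of `P_r` indexed `u_1, …, u_r`, the middle vertex `u_{(r+1)/2}`
corresponds to index `(r-1)/2` in `Fin r`.) -/
theorem stmt10 (r s : ℕ) (hr : 2 ≤ r) (hs : 3 ≤ s) (hro : Odd r) (hso : Odd s) :
    (∀ j : Fin s, IsKARS ((pathGraph r).boxProd (cycleGraph s)) 4
      {((⟨(r - 1) / 2, by omega⟩ : Fin r), j)}) ∧
    adim ((pathGraph r).boxProd (cycleGraph s)) 4 = 1 := by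
  haveI : NeZero s := ⟨by omega⟩
  have hdist : ∀ x y, ((pathGraph r).boxProd (cycleGraph s)).dist x y = DD r s x y :=
    dist_formula (by omega) hs
  have key : ∀ j : Fin s, IsKARS ((pathGraph r).boxProd (cycleGraph s)) 4
      {((⟨(r - 1) / 2, by omega⟩ : Fin r), j)} := by
    intro j
    generalize hgen : ((⟨(r - 1) / 2, by omega⟩ : Fin r), j) = c
    have hc : c.1.val = (r - 1) / 2 := by rw [← hgen]
    have hc2 : c.2 = j := by rw [← hgen]
    obtain ⟨mm, hmm⟩ := hro
    obtain ⟨hh, hhh⟩ := hso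
    have hcls : ∀ x, cls ((pathGraph r).boxProd (cycleGraph s)) {c} x =
        {y | y ≠ c ∧ DD r s y c = DD r s x c} := by
      intro x
      rw [cls_singleton]
      ext y
      simp only [Set.mem_setOf_eq, hdist]
    refine ⟨Set.singleton_nonempty _, ?_, ?_, ?_⟩
    · refine ⟨((⟨0, by omega⟩ : Fin r), j), ?_⟩
      simp only [Set.mem_compl_iff, Set.mem_singleton_iff]
      intro he
      have h0 := congrArg (fun p : Fin r × Fin s => p.1.val) he
      simp only [hc] at h0
      omega
    · intro x hx
      rw [hcls]
      have hx' : x ≠ c := by simpa using hx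
      have ht1 : 1 ≤ DD r s x c := by
        rcases Nat.eq_zero_or_pos (DD r s x c) with h | h
        · exact absurd (DD_eq_zero h) hx'
        · omega
      have ht2 := DD_le_bound hr hs ⟨mm, hmm⟩ ⟨hh, hhh⟩ c hc x
      obtain ⟨p1, p2, p3, p4, h12, h13, h14, h23, h24, h34, d1, d2, d3, d4⟩ :=
        ge_four_aux hr hs ⟨mm, hmm⟩ ⟨hh, hhh⟩ c hc (DD r s x c) ht1 ht2
      have hmem : ∀ p : Fin r × Fin s, DD r s p c = DD r s x c →
          p ∈ {y | y ≠ c ∧ DD r s y c = DD r s x c} := by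
        intro p hp
        refine ⟨?_, hp⟩
        intro he
        rw [he, DD_self] at hp
        omega
      exact ncard_ge_four h12 h13 h14 h23 h24 h34 (hmem p1 d1) (hmem p2 d2) (hmem p3 d3)
        (hmem p4 d4)
    · refine ⟨((⟨0, by omega⟩ : Fin r), c.2 + ((((s - 1) / 2 : ℕ)) : Fin s)), ?_, ?_⟩
      · simp only [Set.mem_singleton_iff]
        intro he
        have h0 := congrArg (fun p : Fin r × Fin s => p.1.val) he
        simp only [hc] at h0
        omega
      · rw [hcls]
        have hx0 : DD r s ((⟨0, by omega⟩ : Fin r), c.2 + ((((s - 1) / 2 : ℕ)) : Fin s)) c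
            = (r - 1) / 2 + (s - 1) / 2 := by
          simp only [DD, cd_add hs c.2 ((s - 1) / 2) (by omega), nd]
          rw [hc]
          omega
        rw [hx0, sphere_max hr hs ⟨mm, hmm⟩ ⟨hh, hhh⟩ c hc]
        have hne2 : c.2 + ((((s - 1) / 2 : ℕ)) : Fin s) ≠ c.2 - ((((s - 1) / 2 : ℕ)) : Fin s) :=
          add_ne_sub hs c.2 _ _ (by omega) (by omega) (by omega) (by omega)
        refine ncard_four ?_ ?_ ?_ ?_ ?_ ?_ <;>
          simp only [ne_eq, Prod.mk.injEq, Fin.mk.injEq, not_and] <;>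
          first
            | (exact fun hp => absurd hp.2 hne2)
            | (intro h; omega)
            | (exact fun hp => hne2 hp.2)
  refine ⟨key, le_antisymm ?_ ?_⟩
  · apply sInf_le
    exact ⟨_, key 0, by simp [Set.ncard_singleton]⟩
  · apply le_sInf
    rintro x ⟨S, hS, rfl⟩
    have hpos : 0 < S.ncard := (Set.ncard_pos (Set.toFinite S)).mpr hS.1
    show (1 : ℕ∞) ≤ (S.ncard : ℕ∞)
    exact_mod_cast hpos
end
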